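/- Let r₁ ≥ 1, let n ≥ r₁ be an integer, and let m₁ ≤ ⋯ ≤ m_{r₁} ≤ −1 be integers. Then the alternating sum over all subsets S of {1,…,r₁}, Σ_{S ⊆ {1,…,r₁}} (−1)^{|S|} x_{α₂}(n − |S|) · x_{α₁}(m₁ + χ_S(1)) ⋯ x_{α₁}(m_{r₁} + χ_S(r₁)), lies in the left ideal U(n̄)n̄⁺, where χ_S(t) = 1 if t ∈ S and χ_S(t) = 0 otherwise. (Written out, this is x_{α₂}(n)x_{α₁}(m₁)⋯x_{α₁}(m_{r₁}) − Σ_t x_{α₂}(n−1)x_{α₁}(m₁)⋯x_{α₁}(m_t+1)⋯x_{α₁}(m_{r₁}) + ⋯ + (−1)^{r₁} x_{α₂}(n−r₁)x_{α₁}(m₁+1)⋯x_{α₁}(m_{r₁}+1).) -/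

import Mathlib

open scoped TensorProduct

attribute [local instance 100] LieRing.ofAssociativeRing

noncomputable section

/-- 3×3 complex matrices 𝔤𝔩(3,ℂ), with the commutator Lie bracket. -/
abbrev Mat3 : Type := Matrix (Fin 3) (Fin 3) ℂ

lemma upperTri_mul {a b : Mat3} (ha : ∀ i j : Fin 3, j ≤ i → a i j = 0)
    (hb : ∀ i j : Fin 3, j ≤ i → b i j = 0) :
    ∀ i j : Fin 3, j ≤ i → (a * b) i j = 0 := by
  intro i j hij
  rw [Matrix.mul_apply]
  refine Finset.sum_eq_zero fun k _ => ?_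
  by_cases hk : k ≤ i
  · rw [ha i k hk, zero_mul]
  · rw [hb k j (hij.trans (not_le.mp hk).le), mul_zero]

/-- The Lie algebra 𝔫 of strictly upper triangular 3×3 complex matrices. -/
def strictUpper : LieSubalgebra ℂ Mat3 where
  carrier := {M : Mat3 | ∀ i j : Fin 3, j ≤ i → M i j = 0}
  add_mem' := fun {a b} ha hb i j hij => by
    simp only [Matrix.add_apply, ha i j hij, hb i j hij, add_zero]
  zero_mem' := fun i j _ => rfl
  smul_mem' := fun c a ha i j hij => by
    simp only [Matrix.smul_apply, ha i j hij, smul_zero]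
  lie_mem' := fun {a b} ha hb i j hij => by
    rw [Ring.lie_def, Matrix.sub_apply, upperTri_mul ha hb i j hij,
      upperTri_mul hb ha i j hij, sub_zero]

/-- x_{α₁} = E₁₂ ∈ 𝔫. -/
def xa1 : strictUpper :=
  ⟨Matrix.single 0 1 1, by
    intro i j hij
    fin_cases i <;> fin_cases j <;> simp_all [Matrix.single, Matrix.of_apply]⟩

/-- x_{α₂} = E₂₃ ∈ 𝔫. -/
def xa2 : strictUpper :=
  ⟨Matrix.single 1 2 1, by
    intro i j hij
    fin_cases i <;> fin_cases j <;> simp_all [Matrix.single, Matrix.of_apply]⟩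

/-- x_{α₁+α₂} = E₁₃ ∈ 𝔫. -/
def xa12 : strictUpper :=
  ⟨Matrix.single 0 2 1, by
    intro i j hij
    fin_cases i <;> fin_cases j <;> simp_all [Matrix.single, Matrix.of_apply]⟩

/-- The loop algebra n̄ = ℂ[t,t⁻¹] ⊗_ℂ 𝔫, with bracket
`[tᵐ ⊗ x, tⁿ ⊗ y] = t^{m+n} ⊗ [x,y]`. -/
abbrev loopN : Type := LaurentPolynomial ℂ ⊗[ℂ] strictUpper

/-- n̄ is a Lie algebra over ℂ (by restriction of scalars from ℂ[t,t⁻¹]). -/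
instance : LieAlgebra ℂ loopN where
  lie_smul c x y := by
    rw [← algebraMap_smul (LaurentPolynomial ℂ) c y,
      ← algebraMap_smul (LaurentPolynomial ℂ) c ⁅x, y⁆]
    exact lie_smul ((algebraMap ℂ (LaurentPolynomial ℂ)) c) x y

/-- The universal enveloping algebra U(n̄) over ℂ. -/
abbrev Uenv : Type := UniversalEnvelopingAlgebra ℂ loopN

/-- x(m) = tᵐ ⊗ x, viewed as an element of U(n̄). -/
def XX (x : strictUpper) (m : ℤ) : Uenv :=
  UniversalEnvelopingAlgebra.ι ℂ (LaurentPolynomial.T m ⊗ₜ[ℂ] x)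

/-- The ordered monomial x(m₁)⋯x(m_r) ∈ U(n̄) attached to a single root vector
`a` and a sequence of integers `m`. -/
def monom {r : ℕ} (a : strictUpper) (m : Fin r → ℤ) : Uenv :=
  (List.ofFn fun i => XX a (m i)).prod

/-- The left ideal U(n̄)n̄⁺ of U(n̄), generated by the x(m) with x ∈ 𝔫, m ≥ 0. -/
def UNplus : Ideal Uenv :=
  Ideal.span {u : Uenv | ∃ (x : strictUpper) (m : ℤ), 0 ≤ m ∧ u = XX x m}

/-- The truncated relation R^{[j]}_{t;m} = Σ_{m₁,m₂ ≤ m, m₁+m₂=t} x_{α_j}(m₁)x_{α_j}(m₂)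
(here `a` stands for the root vector x_{α_j}). -/
def Rtrunc (a : strictUpper) (t m : ℤ) : Uenv :=
  ∑ k ∈ Finset.Icc (t - m) m, XX a k * XX a (t - k)

/-- The two-sided ideal 𝒥 of U(n̄) generated by all R^{[j]}_{t;m}, j ∈ {1,2}. -/
def Jideal : TwoSidedIdeal Uenv :=
  TwoSidedIdeal.span {u : Uenv | ∃ t m : ℤ, u = Rtrunc xa1 t m ∨ u = Rtrunc xa2 t m}

/-- The difference two condition on a sequence m₁, …, m_r. -/
def diffTwo {r : ℕ} (m : Fin r → ℤ) : Prop :=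
  ∀ i j : Fin r, (i : ℕ) + 1 = (j : ℕ) → m i + 2 ≤ m j


-- ————————————————— auxiliary lemmas —————————————————

lemma XX_comm (x y : strictUpper) (a b : ℤ) :
    XX x a * XX y b = XX y b * XX x a +
      UniversalEnvelopingAlgebra.ι ℂ (L := loopN)
        ((LaurentPolynomial.T (a + b) : LaurentPolynomial ℂ) ⊗ₜ[ℂ] ⁅x, y⁆) := by
  have h := LieHom.map_lie (UniversalEnvelopingAlgebra.ι ℂ (L := loopN))
    (LaurentPolynomial.T a ⊗ₜ[ℂ] x) (LaurentPolynomial.T b ⊗ₜ[ℂ] y)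
  rw [LieAlgebra.ExtendScalars.bracket_tmul, ← LaurentPolynomial.T_add, Ring.lie_def] at h
  simp only [XX]
  rw [h]
  abel

lemma XX_swap (p q : ℤ) :
    XX xa2 p * XX xa1 q - XX xa2 (p - 1) * XX xa1 (q + 1)
      = XX xa1 q * XX xa2 p - XX xa1 (q + 1) * XX xa2 (p - 1) := by
  have h1 := XX_comm xa2 xa1 p q
  have h2 := XX_comm xa2 xa1 (p - 1) (q + 1)
  rw [show p - 1 + (q + 1) = p + q from by ring] at h2
  rw [h1, h2]
  abel

lemma monom_succ {r : ℕ} (a : strictUpper) (v : Fin (r + 1) → ℤ) :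
    monom a v = XX a (v 0) * monom a (fun i => v i.succ) := by
  simp [monom, List.ofFn_succ]

def cnt {r : ℕ} (g : Fin r → Bool) : ℕ := ∑ t, if g t then 1 else 0

lemma cnt_cons {r : ℕ} (b : Bool) (g : Fin r → Bool) :
    cnt (Fin.cons b g) = (if b then 1 else 0) + cnt g := by
  simp only [cnt, Fin.sum_univ_succ, Fin.cons_zero, Fin.cons_succ]

lemma per_g (a c q : ℤ) (s : ℂ) (R : Uenv) :
    (-s) • (XX xa2 (a - 1 - c) * (XX xa1 (q + 1) * R)) + s • (XX xa2 (a - c) * (XX xa1 q * R))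
      = XX xa1 q * (s • (XX xa2 (a - c) * R)) - XX xa1 (q + 1) * (s • (XX xa2 (a - 1 - c) * R)) := by
  have hsw := XX_swap (a - c) q
  rw [show a - c - 1 = a - 1 - c from by ring] at hsw
  have key' := congrArg (· * R) hsw
  simp only [sub_mul, mul_assoc] at key'
  rw [mul_smul_comm, mul_smul_comm, ← smul_sub, ← key', smul_sub, neg_smul]
  abel

lemma aux_mem : ∀ (r : ℕ) (a : ℤ), (r : ℤ) ≤ a → ∀ (m : Fin r → ℤ),
    (∑ g : Fin r → Bool, ((-1 : ℂ) ^ cnt g) •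
      (XX xa2 (a - (cnt g : ℤ)) * monom xa1 (fun t => m t + if g t then 1 else 0))) ∈ UNplus := by
  intro r
  induction r with
  | zero =>
    intro a ha m
    have hconst : ∀ g : Fin 0 → Bool, ((-1 : ℂ) ^ cnt g) •
        (XX xa2 (a - (cnt g : ℤ)) * monom xa1 (fun t => m t + if g t then 1 else 0))
          = XX xa2 a := by
      intro g
      have h0 : cnt g = 0 := by simp [cnt]
      rw [h0]
      have hmon : monom xa1 (fun t => m t + if g t then 1 else 0) = 1 := by
        simp [monom]
      rw [hmon, mul_one]
      simp
    rw [Finset.sum_congr rfl fun g _ => hconst g, Finset.sum_const]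
    simp only [Finset.card_univ]
    have : Fintype.card (Fin 0 → Bool) = 1 := by simp
    rw [this, one_smul]
    exact Ideal.subset_span ⟨xa2, a, by exact_mod_cast ha, rfl⟩
  | succ r ih =>
    intro a ha m
    have har : (r : ℤ) ≤ a := by push_cast at ha ⊢; omega
    have har' : (r : ℤ) ≤ a - 1 := by push_cast at ha ⊢; omega
    have hA := ih a har (fun i => m i.succ)
    have hB := ih (a - 1) har' (fun i => m i.succ)
    have hrw : (∑ g : Fin (r + 1) → Bool, ((-1 : ℂ) ^ cnt g) •
          (XX xa2 (a - (cnt g : ℤ)) * monom xa1 (fun t => m t + if g t then 1 else 0)))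
        = XX xa1 (m 0) * (∑ g : Fin r → Bool, ((-1 : ℂ) ^ cnt g) •
            (XX xa2 (a - (cnt g : ℤ)) *
              monom xa1 (fun t => m t.succ + if g t then 1 else 0)))
          - XX xa1 (m 0 + 1) * (∑ g : Fin r → Bool, ((-1 : ℂ) ^ cnt g) •
            (XX xa2 (a - 1 - (cnt g : ℤ)) *
              monom xa1 (fun t => m t.succ + if g t then 1 else 0))) := by
      rw [← Equiv.sum_comp (Fin.consEquiv fun _ => Bool), Fintype.sum_prod_type,
        Fintype.sum_bool, Finset.mul_sum, Finset.mul_sum, ← Finset.sum_sub_distrib,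
        ← Finset.sum_add_distrib]
      refine Finset.sum_congr rfl fun g _ => ?_
      have hc1 : cnt (Fin.cons true g) = cnt g + 1 := by simp [cnt_cons, add_comm]
      have hc0 : cnt (Fin.cons false g) = cnt g := by simp [cnt_cons]
      have hm1 : monom xa1 (fun t => m t + if (Fin.cons true g : Fin (r+1) → Bool) t then 1 else 0)
          = XX xa1 (m 0 + 1) * monom xa1 (fun t => m t.succ + if g t then 1 else 0) := by
        rw [monom_succ]; simp
      have hm0 : monom xa1 (fun t => m t + if (Fin.cons false g : Fin (r+1) → Bool) t then 1 else 0)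
          = XX xa1 (m 0) * monom xa1 (fun t => m t.succ + if g t then 1 else 0) := by
        rw [monom_succ]; simp
      have he : ∀ b : Bool,
          ((Fin.consEquiv fun _ => Bool) (b, g)) = (Fin.cons b g : Fin (r+1) → Bool) :=
        fun b => rfl
      simp only [he]
      rw [hc1, hc0, hm1, hm0]
      rw [show a - ((cnt g + 1 : ℕ) : ℤ) = a - 1 - (cnt g : ℤ) from by push_cast; ring,
        pow_succ, mul_comm ((-1 : ℂ) ^ cnt g) (-1), neg_one_mul, neg_smul, ← neg_smul]
      exact per_g a (cnt g) (m 0) ((-1 : ℂ) ^ cnt g)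
        (monom xa1 (fun t => m t.succ + if g t then 1 else 0))
    rw [hrw]
    exact Submodule.sub_mem _ (Ideal.mul_mem_left _ _ hA) (Ideal.mul_mem_left _ _ hB)

def finsetBoolEquiv {α : Type*} [Fintype α] [DecidableEq α] : Finset α ≃ (α → Bool) where
  toFun S t := decide (t ∈ S)
  invFun g := Finset.univ.filter (fun t => g t = true)
  left_inv S := by ext t; simp
  right_inv g := by funext t; simp

lemma cnt_decide {r : ℕ} (S : Finset (Fin r)) :
    cnt (fun t => decide (t ∈ S)) = S.card := by
  simp only [cnt, decide_eq_true_eq]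
  rw [Finset.sum_ite_mem, Finset.univ_inter, Finset.card_eq_sum_ones]

/-- The alternating-sum identity (3.28) of the paper: for `r₁ ≥ 1`, `n ≥ r₁` and
`m₁ ≤ ⋯ ≤ m_{r₁} ≤ −1`, the alternating sum over all subsets `S ⊆ {1,…,r₁}`,
`Σ_S (−1)^{|S|} x_{α₂}(n − |S|) x_{α₁}(m₁ + χ_S(1)) ⋯ x_{α₁}(m_{r₁} + χ_S(r₁))`,
lies in the left ideal U(n̄)n̄⁺. -/
theorem statement10 (r1 : ℕ) (hr1 : 1 ≤ r1) (n : ℤ) (hn : (r1 : ℤ) ≤ n)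
    (m : Fin r1 → ℤ) (hm : Monotone m) (hneg : ∀ i, m i ≤ -1) :
    (∑ S : Finset (Fin r1), ((-1 : ℂ) ^ S.card) •
        (XX xa2 (n - (S.card : ℤ)) *
          monom xa1 (fun t => m t + if t ∈ S then 1 else 0))) ∈ UNplus := by
  have key := aux_mem r1 n hn m
  have heq : (∑ S : Finset (Fin r1), ((-1 : ℂ) ^ S.card) •
        (XX xa2 (n - (S.card : ℤ)) *
          monom xa1 (fun t => m t + if t ∈ S then 1 else 0)))
      = ∑ g : Fin r1 → Bool, ((-1 : ℂ) ^ cnt g) •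
          (XX xa2 (n - (cnt g : ℤ)) *
            monom xa1 (fun t => m t + if g t then 1 else 0)) := by
    refine Fintype.sum_equiv finsetBoolEquiv _ _ fun S => ?_
    have h1 : cnt (finsetBoolEquiv S) = S.card := cnt_decide S
    have h2 : (fun t => m t + if t ∈ S then 1 else 0)
        = (fun t : Fin r1 => m t + if finsetBoolEquiv S t = true then 1 else 0) := by
      funext t
      simp [finsetBoolEquiv]
    rw [h1, h2]
  rw [heq]
  exact key

end
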